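/- Let X_{AB}, Y_{AB} be positive definite on H_A ⊗ H_B, ω_A a positive definite density operator on H_A, τ_{AB} = X_{AB}^{1/2}((X_A^{-1/2} ω_A X_A^{-1/2}) ⊗ I_B) X_{AB}^{1/2}, and V the isometry V = X_{AB}^{1/2}(X_A^{-1/2} ⊗ I_Â)|Γ⟩_{BB̂}. Then V†(τ_{AB}^{-1} ⊗ Y_{ÂB̂}ᵀ)V = ω_A^{-1} ⊗ Y_Âᵀ, where Y_Â = Tr_B̂ Y_{ÂB̂}. -/

import Mathlib

open Matrix Kronecker BigOperators
open scoped Classical ComplexOrder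

/-- Apply a real function to a Hermitian matrix via the functional calculus
(eigenvalue decomposition); junk value `0` on non-Hermitian input. -/
noncomputable def matFun {n : Type} [Fintype n] [DecidableEq n]
    (f : ℝ → ℝ) (A : Matrix n n ℂ) : Matrix n n ℂ :=
  if hA : A.IsHermitian then
    (hA.eigenvectorUnitary : Matrix n n ℂ) *
      Matrix.diagonal (fun i => (f (hA.eigenvalues i) : ℂ)) *
      (star (hA.eigenvectorUnitary : Matrix n n ℂ))
  else 0

/-- The unnormalized maximally entangled vector `∑ i, |i⟩⊗|i⟩`. -/
def gammaVec (n : Type) [DecidableEq n] : n × n → ℂ :=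
  fun p => if p.1 = p.2 then 1 else 0

/-- Partial trace over the second tensor factor. -/
noncomputable def ptraceB {a b : Type} [Fintype b]
    (X : Matrix (a × b) (a × b) ℂ) : Matrix a a ℂ :=
  fun i j => ∑ k, X (i, k) (j, k)

/-- Matrix power `A ^ p` (real exponent) via the functional calculus. -/
noncomputable def mpow {n : Type} [Fintype n] [DecidableEq n]
    (A : Matrix n n ℂ) (p : ℝ) : Matrix n n ℂ :=
  matFun (fun x => x ^ p) A

/-- Square root of a positive semidefinite matrix, as `Matrix.PosSemidef.sqrt` was defined in
Mathlib of December 2024 (removed since). -/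
noncomputable def Matrix.PosSemidef.sqrt {n 𝕜 : Type*} [Fintype n] [RCLike 𝕜] [DecidableEq n]
    {A : Matrix n n 𝕜} (hA : A.PosSemidef) : Matrix n n 𝕜 :=
  hA.1.eigenvectorUnitary.1 * diagonal ((↑) ∘ (√·) ∘ hA.1.eigenvalues) *
    (star hA.1.eigenvectorUnitary : Matrix n n 𝕜)

/-- See stmt_8: the Petz-recovery isometry as a matrix. -/
noncomputable def petzIso {a b : Type} [Fintype a] [Fintype b] [DecidableEq a] [DecidableEq b]
    (M : Matrix (a × b) (a × b) ℂ) :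
    Matrix ((a × b) × (a × b)) (a × a) ℂ :=
  fun o p => M o.1 (p.1, o.2.2) * (if o.2.1 = p.2 then 1 else 0)

lemma Matrix.PosSemidef.posSemidef_sqrt {n 𝕜 : Type*} [Fintype n] [RCLike 𝕜] [DecidableEq n]
    {A : Matrix n n 𝕜} (hA : A.PosSemidef) : hA.sqrt.PosSemidef := by
  unfold Matrix.PosSemidef.sqrt
  have hd : (diagonal ((↑) ∘ (√·) ∘ hA.1.eigenvalues : n → 𝕜)).PosSemidef :=
    Matrix.PosSemidef.diagonal fun i => by
      simp only [Pi.zero_apply, Function.comp_apply]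
      exact RCLike.ofReal_nonneg.2 (Real.sqrt_nonneg _)
  have := hd.mul_mul_conjTranspose_same (hA.1.eigenvectorUnitary : Matrix n n 𝕜)
  simpa [Unitary.coe_star, Matrix.star_eq_conjTranspose] using this

lemma Matrix.PosSemidef.sqrt_mul_self {n 𝕜 : Type*} [Fintype n] [RCLike 𝕜] [DecidableEq n]
    {A : Matrix n n 𝕜} (hA : A.PosSemidef) : hA.sqrt * hA.sqrt = A := by
  unfold Matrix.PosSemidef.sqrt
  have hU : (star hA.1.eigenvectorUnitary : Matrix n n 𝕜) * hA.1.eigenvectorUnitary.1 = 1 :=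
    Unitary.coe_star_mul_self _
  have hdd : diagonal ((↑) ∘ (√·) ∘ hA.1.eigenvalues : n → 𝕜) *
      diagonal ((↑) ∘ (√·) ∘ hA.1.eigenvalues : n → 𝕜) =
      diagonal (RCLike.ofReal ∘ hA.1.eigenvalues) := by
    rw [diagonal_mul_diagonal]
    congr 1
    funext i
    simp only [Function.comp_apply]
    rw [← RCLike.ofReal_mul, Real.mul_self_sqrt (hA.eigenvalues_nonneg i)]
  conv_rhs => rw [hA.1.spectral_theorem, Unitary.conjStarAlgAut_apply]
  calc _ = (hA.1.eigenvectorUnitary : Matrix n n 𝕜) *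
        diagonal ((↑) ∘ (√·) ∘ hA.1.eigenvalues : n → 𝕜) *
        ((star hA.1.eigenvectorUnitary : Matrix n n 𝕜) * hA.1.eigenvectorUnitary.1) *
        diagonal ((↑) ∘ (√·) ∘ hA.1.eigenvalues : n → 𝕜) *
        (star hA.1.eigenvectorUnitary : Matrix n n 𝕜) := by simp only [Matrix.mul_assoc]
    _ = _ := by
      rw [hU, Matrix.mul_one, Matrix.mul_assoc _ (diagonal _) (diagonal _), hdd]

private lemma kron_conjTranspose {a b c d : Type}
    (A : Matrix a b ℂ) (B : Matrix c d ℂ) :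
    (A ⊗ₖ B)ᴴ = Aᴴ ⊗ₖ Bᴴ := by
  ext ⟨i, j⟩ ⟨k, l⟩
  simp [Matrix.conjTranspose_apply, kroneckerMap_apply, star_mul', mul_comm]

private lemma petz_conj {a b : Type} [Fintype a] [Fintype b] [DecidableEq a] [DecidableEq b]
    (M Z Y : Matrix (a × b) (a × b) ℂ) (W : Matrix a a ℂ)
    (h : Mᴴ * Z * M = W ⊗ₖ (1 : Matrix b b ℂ)) :
    (petzIso M)ᴴ * (Z ⊗ₖ Yᵀ) * petzIso M = W ⊗ₖ (ptraceB Y)ᵀ := by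
  have hent : ∀ p q : a × b, (∑ s, (∑ r, star (M r p) * Z r s) * M s q)
      = W p.1 q.1 * (if p.2 = q.2 then 1 else 0) := by
    intro p q
    have := congrFun (congrFun h p) q
    simpa [Matrix.mul_apply, Matrix.one_apply, Matrix.conjTranspose_apply,
      Finset.sum_mul] using this
  ext ⟨m, n⟩ ⟨m', n'⟩
  simp only [Matrix.mul_apply, Matrix.conjTranspose_apply, petzIso,
    kroneckerMap_apply, transpose_apply, ptraceB, star_mul', star_one, star_zero,
    apply_ite (star : ℂ → ℂ),
    Fintype.sum_prod_type, ite_mul, mul_ite, mul_zero, zero_mul, mul_one, one_mul,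
    Finset.sum_ite_irrel, Finset.sum_const_zero, Finset.sum_ite_eq', Finset.sum_ite_eq, Finset.mem_univ, if_true, Finset.sum_mul]
  conv_lhs => enter [2, x, 2, y, 2, x1, 2, x2]; rw [Finset.sum_comm]
  conv_lhs => enter [2, x, 2, y, 2, x1]; rw [Finset.sum_comm]
  conv_lhs => enter [2, x, 2, y]; rw [Finset.sum_comm]
  conv_lhs => enter [2, x]; rw [Finset.sum_comm]
  rw [Finset.sum_comm]
  conv_lhs => enter [2, x4, 2, x]; rw [Finset.sum_comm]
  conv_lhs => enter [2, x4]; rw [Finset.sum_comm]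
  have hent' : ∀ l l' : b, (∑ x : a, ∑ x1 : b, ∑ x2 : a, ∑ x3 : b,
      star (M (x2, x3) (m, l)) * Z (x2, x3) (x, x1) * M (x, x1) (m', l'))
      = W m m' * (if l = l' then 1 else 0) := fun l l' => by
    simpa [Fintype.sum_prod_type, Finset.sum_mul] using hent (m, l) (m', l')
  rw [Finset.mul_sum]
  refine Finset.sum_congr rfl fun x4 _ => ?_
  calc (∑ y : b, ∑ x : a, ∑ x1 : b, ∑ x2 : a, ∑ x3 : b,
        star (M (x2, x3) (m, x4)) * (Z (x2, x3) (x, x1) * Y (n', y) (n, x4)) * M (x, x1) (m', y))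
      = ∑ y : b, Y (n', y) (n, x4) * (∑ x : a, ∑ x1 : b, ∑ x2 : a, ∑ x3 : b,
        star (M (x2, x3) (m, x4)) * Z (x2, x3) (x, x1) * M (x, x1) (m', y)) := by
        refine Finset.sum_congr rfl fun y _ => ?_
        simp only [Finset.mul_sum]
        exact Finset.sum_congr rfl fun x _ => Finset.sum_congr rfl fun x1 _ =>
          Finset.sum_congr rfl fun x2 _ => Finset.sum_congr rfl fun x3 _ => by ring
    _ = ∑ y : b, Y (n', y) (n, x4) * (W m m' * (if x4 = y then 1 else 0)) :=
        Finset.sum_congr rfl fun y _ => by rw [hent']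
    _ = W m m' * Y (n', x4) (n, x4) := by
        simp [mul_ite, mul_zero, Finset.sum_ite_eq, Finset.sum_ite_eq']
        ring

set_option maxHeartbeats 1000000 in
/-- For `τ_{AB}` the Petz-recovery output of `ω_A` and `V` the Petz-recovery isometry,
`V†(τ_{AB}⁻¹ ⊗ Y_{ÂB̂}ᵀ)V = ω_A⁻¹ ⊗ Y_Âᵀ`. -/
theorem stmt_10 (a b : ℕ) (XAB YAB : Matrix (Fin a × Fin b) (Fin a × Fin b) ℂ)
    (hXAB : XAB.PosDef) (hYAB : YAB.PosDef) (hXA : (ptraceB XAB).PosDef)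
    (ω : Matrix (Fin a) (Fin a) ℂ) (hω : ω.PosDef) (hω1 : ω.trace = 1) :
    (petzIso (hXAB.posSemidef.sqrt *
        ((hXA.posSemidef.sqrt⁻¹) ⊗ₖ (1 : Matrix (Fin b) (Fin b) ℂ))))ᴴ *
      (((hXAB.posSemidef.sqrt *
          (((hXA.posSemidef.sqrt⁻¹ * ω * hXA.posSemidef.sqrt⁻¹) ⊗ₖ
              (1 : Matrix (Fin b) (Fin b) ℂ))) * hXAB.posSemidef.sqrt)⁻¹) ⊗ₖ YABᵀ) *
      petzIso (hXAB.posSemidef.sqrt *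
        ((hXA.posSemidef.sqrt⁻¹) ⊗ₖ (1 : Matrix (Fin b) (Fin b) ℂ))) =
    ω⁻¹ ⊗ₖ (ptraceB YAB)ᵀ := by
  set S := hXAB.posSemidef.sqrt with hSdef
  set T := hXA.posSemidef.sqrt with hTdef
  have hSH : Sᴴ = S := hXAB.posSemidef.posSemidef_sqrt.isHermitian
  have hTH : Tᴴ = T := hXA.posSemidef.posSemidef_sqrt.isHermitian
  have hSdet : IsUnit S.det := by
    have h2 : S.det * S.det = XAB.det := by
      rw [← Matrix.det_mul, hXAB.posSemidef.sqrt_mul_self]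
    have := hXAB.det_pos
    refine isUnit_iff_ne_zero.2 fun hz => ?_
    rw [hz, zero_mul] at h2
    simp [← h2] at this
  have hTdet : IsUnit T.det := by
    have h2 : T.det * T.det = (ptraceB XAB).det := by
      rw [← Matrix.det_mul, hXA.posSemidef.sqrt_mul_self]
    have := hXA.det_pos
    refine isUnit_iff_ne_zero.2 fun hz => ?_
    rw [hz, zero_mul] at h2
    simp [← h2] at this
  refine petz_conj _ _ _ _ ?_
  have hMH : (S * ((T⁻¹) ⊗ₖ (1 : Matrix (Fin b) (Fin b) ℂ)))ᴴ
      = ((T⁻¹) ⊗ₖ (1 : Matrix (Fin b) (Fin b) ℂ)) * S := by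
    rw [Matrix.conjTranspose_mul, hSH, kron_conjTranspose,
      Matrix.conjTranspose_nonsing_inv, hTH, Matrix.conjTranspose_one]
  rw [hMH]
  have hinv : (S * ((T⁻¹ * ω * T⁻¹) ⊗ₖ (1 : Matrix (Fin b) (Fin b) ℂ)) * S)⁻¹
      = S⁻¹ * ((T * ω⁻¹ * T) ⊗ₖ (1 : Matrix (Fin b) (Fin b) ℂ)) * S⁻¹ := by
    rw [Matrix.mul_inv_rev, Matrix.mul_inv_rev, Matrix.inv_kronecker,
      Matrix.mul_inv_rev, Matrix.mul_inv_rev, Matrix.nonsing_inv_nonsing_inv _ hTdet,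
      inv_one, mul_assoc]
    simp [Matrix.mul_assoc]
  rw [hinv]
  have hSS : S * S⁻¹ = 1 := Matrix.mul_nonsing_inv _ hSdet
  have hSS' : S⁻¹ * S = 1 := Matrix.nonsing_inv_mul _ hSdet
  have hTT : T⁻¹ * T = 1 := Matrix.nonsing_inv_mul _ hTdet
  have hTT' : T * T⁻¹ = 1 := Matrix.mul_nonsing_inv _ hTdet
  calc ((T⁻¹) ⊗ₖ (1 : Matrix (Fin b) (Fin b) ℂ)) * S *
        (S⁻¹ * ((T * ω⁻¹ * T) ⊗ₖ (1 : Matrix (Fin b) (Fin b) ℂ)) * S⁻¹) *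
        (S * ((T⁻¹) ⊗ₖ (1 : Matrix (Fin b) (Fin b) ℂ)))
      = ((T⁻¹) ⊗ₖ (1 : Matrix (Fin b) (Fin b) ℂ)) * (S * S⁻¹) *
          ((T * ω⁻¹ * T) ⊗ₖ (1 : Matrix (Fin b) (Fin b) ℂ)) * (S⁻¹ * S) *
          ((T⁻¹) ⊗ₖ (1 : Matrix (Fin b) (Fin b) ℂ)) := by
        simp only [Matrix.mul_assoc]
    _ = ((T⁻¹) ⊗ₖ (1 : Matrix (Fin b) (Fin b) ℂ)) *
          ((T * ω⁻¹ * T) ⊗ₖ (1 : Matrix (Fin b) (Fin b) ℂ)) *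
          ((T⁻¹) ⊗ₖ (1 : Matrix (Fin b) (Fin b) ℂ)) := by
        rw [hSS, hSS', Matrix.mul_one, Matrix.mul_one]
    _ = ω⁻¹ ⊗ₖ (1 : Matrix (Fin b) (Fin b) ℂ) := by
        rw [← Matrix.mul_kronecker_mul, ← Matrix.mul_kronecker_mul, Matrix.one_mul,
          Matrix.one_mul]
        congr 1
        rw [← Matrix.mul_assoc, ← Matrix.mul_assoc, hTT, Matrix.one_mul,
          Matrix.mul_assoc, hTT', Matrix.mul_one]
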